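/- Let a ∈ 𝒜, ξ ∈ ℝ with |ξ| ≥ 1, and let f : ℝ → ℂ be 1-periodic and continuously differentiable with f' absolutely continuous and f'' = a g a.e. for some bounded measurable g. Let u be a periodic W^{2,1} function with −u'' + iξ a u = a f a.e., and set k(x) := u(x) − f(x)/(1 + iξ). Then there is a constant C, independent of a, ξ, f and g, such that ‖k‖_{H¹} ≤ C |ξ|^{−3/2} [f + g]_a. Moreover, if in addition ∫ a f = 0, then ‖k‖_∞ ≤ 2 [f + g]_a. -/

import Mathlib

open MeasureTheory Set Complex

noncomputable section

/-- `a ∈ 𝒜`: a measurable 1-periodic function (a function on the torus `𝕋`),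
nonnegative a.e., integrable over one period, with `∫ a = 1`. -/
def MemA (a : ℝ → ℝ) : Prop :=
  Measurable a ∧ (∀ x, a (x + 1) = a x) ∧ (∀ᵐ x : ℝ, 0 ≤ a x) ∧
    IntegrableOn a (Ioc 0 1) ∧ (∫ x in Ioc (0:ℝ) 1, a x) = 1

/-- A periodic `W^{2,1}` function: a 1-periodic continuously differentiable
`u : ℝ → ℂ` whose derivative is absolutely continuous with (periodic) second
derivative `u'' ∈ L¹(𝕋)`. -/
def IsPeriodicW21 (u u'' : ℝ → ℂ) : Prop :=
  (∀ x, u (x + 1) = u x) ∧ (∀ x, u'' (x + 1) = u'' x) ∧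
  ContDiff ℝ 1 u ∧
  (∀ x, deriv u x = deriv u 0 + ∫ t in (0:ℝ)..x, u'' t) ∧
  IntegrableOn u'' (Ioc 0 1)

/-- The seminorm `[h]_a = (∫ a |h|²)^{1/2}`. -/
def seminormA (a : ℝ → ℝ) (h : ℝ → ℂ) : ℝ :=
  Real.sqrt (∫ x in Ioc (0:ℝ) 1, a x * ‖h x‖ ^ 2)


lemma cs_integral {μ : Measure ℝ} {p q : ℝ → ℝ} (hp : 0 ≤ᵐ[μ] p) (hq : 0 ≤ᵐ[μ] q)
    (hp2 : Integrable (fun x => p x ^ 2) μ) (hq2 : Integrable (fun x => q x ^ 2) μ)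
    (hpq : Integrable (fun x => p x * q x) μ) :
    (∫ x, p x * q x ∂μ) ^ 2 ≤ (∫ x, p x ^ 2 ∂μ) * (∫ x, q x ^ 2 ∂μ) := by
  set P := ∫ x, p x ^ 2 ∂μ with hP
  set Q := ∫ x, q x ^ 2 ∂μ with hQ
  set S := ∫ x, p x * q x ∂μ with hS
  have hPnn : 0 ≤ P := integral_nonneg fun x => sq_nonneg _
  have hQnn : 0 ≤ Q := integral_nonneg fun x => sq_nonneg _
  have hSnn : 0 ≤ S := integral_nonneg_of_ae <| by
    filter_upwards [hp, hq] with x h1 h2; exact mul_nonneg h1 h2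
  have key : ∀ t : ℝ, 0 ≤ t ^ 2 * P - 2 * t * S + Q := by
    intro t
    have h1 : Integrable (fun x => t ^ 2 * p x ^ 2 - 2 * t * (p x * q x) + q x ^ 2) μ :=
      ((hp2.const_mul _).sub (hpq.const_mul _)).add hq2
    have h2 : 0 ≤ ∫ x, (t ^ 2 * p x ^ 2 - 2 * t * (p x * q x) + q x ^ 2) ∂μ := by
      apply integral_nonneg_of_ae
      filter_upwards [] with x
      have : t ^ 2 * p x ^ 2 - 2 * t * (p x * q x) + q x ^ 2 = (t * p x - q x) ^ 2 := by ring
      rw [this]; exact sq_nonneg _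
    have h3 : ∫ x, (t ^ 2 * p x ^ 2 - 2 * t * (p x * q x) + q x ^ 2) ∂μ
        = t ^ 2 * P - 2 * t * S + Q := by
      have i1 : Integrable (fun x => t ^ 2 * p x ^ 2 - 2 * t * (p x * q x)) μ :=
        (hp2.const_mul _).sub (hpq.const_mul _)
      rw [integral_add i1 hq2, integral_sub (hp2.const_mul _) (hpq.const_mul _),
        integral_const_mul, integral_const_mul]
    linarith [h3 ▸ h2]
  rcases eq_or_lt_of_le hPnn with hP0 | hP0
  · rcases eq_or_lt_of_le hSnn with hS0 | hS0
    · nlinarith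
    · have := key ((Q + 1) / (2 * S))
      rw [← hP0] at this
      have he : 2 * ((Q + 1) / (2 * S)) * S = Q + 1 := by field_simp
      nlinarith
  · have := key (S / P)
    have h2 : (S / P) ^ 2 * P - 2 * (S / P) * S + Q = Q - S ^ 2 / P := by
      field_simp; ring
    rw [h2] at this
    calc S ^ 2 = S ^ 2 / P * P := by field_simp
    _ ≤ Q * P := by apply mul_le_mul_of_nonneg_right _ hPnn; linarith
    _ = P * Q := mul_comm _ _


lemma integrableOn_mul_bdd {𝕜 : Type*} [RCLike 𝕜] {s : Set ℝ} (hs : MeasurableSet s)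
    {ψ w : ℝ → 𝕜} (hψ : IntegrableOn ψ s) (hw : AEStronglyMeasurable w (volume.restrict s))
    {M : ℝ} (hM : ∀ x ∈ s, ‖w x‖ ≤ M) : IntegrableOn (fun x => ψ x * w x) s := by
  apply Integrable.mono' (hψ.norm.mul_const M) (hψ.1.mul hw)
  filter_upwards [ae_restrict_mem hs] with x hx
  simp only [Pi.mul_apply]
  rw [norm_mul]
  exact mul_le_mul_of_nonneg_left (hM x hx) (norm_nonneg _)

lemma ibp_unit {ψ q φ φd : ℝ → ℂ}
    (hψ : IntegrableOn ψ (Ioc 0 1))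
    (hq : ∀ x ∈ Icc (0:ℝ) 1, q x = q 0 + ∫ t in (0:ℝ)..x, ψ t)
    (hφ : Continuous φ) (hφd : Continuous φd)
    (hder : ∀ x, HasDerivAt φ (φd x) x) :
    ∫ x in Ioc (0:ℝ) 1, ψ x * φ x
      = q 1 * φ 1 - q 0 * φ 0 - ∫ x in Ioc (0:ℝ) 1, q x * φd x := by
  have hψII : ∀ x ∈ Icc (0:ℝ) 1, IntervalIntegrable ψ volume 0 x := by
    intro x hx
    rw [intervalIntegrable_iff_integrableOn_Ioc_of_le hx.1]
    exact hψ.mono (Ioc_subset_Ioc_right hx.2) le_rfl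
  have hFTC : ∀ x : ℝ, φ x = φ 0 + ∫ t in (0:ℝ)..x, φd t := by
    intro x
    have := intervalIntegral.integral_eq_sub_of_hasDerivAt
      (f := φ) (f' := φd) (a := 0) (b := x) (fun t _ => hder t)
      (hφd.intervalIntegrable 0 x)
    rw [this]; ring
  set Φ : ℝ → ℂ := fun x => ∫ t in (0:ℝ)..x, φd t with hΦdef
  have hΦeq : ∀ x, Φ x = φ x - φ 0 := fun x => by rw [hFTC x]; ring
  -- q is continuous on [0,1]
  have hqc : ContinuousOn q (Icc (0:ℝ) 1) := by
    have h1 : ContinuousOn (fun x => q 0 + ∫ t in (0:ℝ)..x, ψ t) (Icc (0:ℝ) 1) := by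
      apply ContinuousOn.add continuousOn_const
      have := intervalIntegral.continuousOn_primitive_interval'
        (μ := volume) (f := ψ) (b₁ := 0) (b₂ := 1) (a := 0)
        (hψII 1 (by norm_num)) (by rw [uIcc_of_le (by norm_num : (0:ℝ) ≤ 1)]; exact ⟨le_rfl, by norm_num⟩)
      rwa [uIcc_of_le (by norm_num : (0:ℝ) ≤ 1)] at this
    exact h1.congr hq
  obtain ⟨Mq, hMq⟩ := isCompact_Icc.exists_bound_of_continuousOn hqc
  have hqm : AEStronglyMeasurable q (volume.restrict (Ioc (0:ℝ) 1)) :=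
    (hqc.aestronglyMeasurable measurableSet_Icc).mono_measure
      (Measure.restrict_mono Ioc_subset_Icc_self le_rfl)
  have hφdInt : IntegrableOn φd (Ioc (0:ℝ) 1) := hφd.integrableOn_Ioc
  have hqφd : IntegrableOn (fun x => q x * φd x) (Ioc (0:ℝ) 1) := by
    have := integrableOn_mul_bdd measurableSet_Ioc hφdInt hqm
      (fun x hx => hMq x (Ioc_subset_Icc_self hx))
    have e : (fun x => q x * φd x) = fun x => φd x * q x := by funext x; ring
    rw [e]; exact this
  have hψΦ : IntegrableOn (fun x => ψ x * Φ x) (Ioc (0:ℝ) 1) := by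
    obtain ⟨M, hM⟩ := isCompact_Icc.exists_bound_of_continuousOn
      ((hφ.sub continuous_const).continuousOn (s := Icc (0:ℝ) 1))
    refine integrableOn_mul_bdd (M := M) measurableSet_Ioc hψ
      ((hφ.sub continuous_const).aestronglyMeasurable.congr
        (Filter.Eventually.of_forall fun x => (hΦeq x).symm))
      (fun x hx => ?_)
    rw [hΦeq x]
    exact hM x (Ioc_subset_Icc_self hx)
  -- step A: split
  have hsplit : ∫ x in Ioc (0:ℝ) 1, ψ x * φ x
      = (∫ x in Ioc (0:ℝ) 1, ψ x) * φ 0 + ∫ x in Ioc (0:ℝ) 1, ψ x * Φ x := by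
    have e : ∀ x, ψ x * φ x = ψ x * φ 0 + ψ x * Φ x := by
      intro x; rw [hΦeq x]; ring
    simp_rw [e]
    rw [integral_add (hψ.mul_const (φ 0)) hψΦ, integral_mul_const]
  -- Fubini
  set F : ℝ → ℝ → ℂ := fun x t => if t ≤ x then ψ x * φd t else 0 with hFdef
  have hFint : Integrable (Function.uncurry F)
      ((volume.restrict (Ioc (0:ℝ) 1)).prod (volume.restrict (Ioc (0:ℝ) 1))) := by
    have h1 : Integrable (fun z : ℝ × ℝ => ψ z.1 * φd z.2)
        ((volume.restrict (Ioc (0:ℝ) 1)).prod (volume.restrict (Ioc (0:ℝ) 1))) :=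
      hψ.mul_prod hφdInt
    have h2 : Function.uncurry F = {p : ℝ × ℝ | p.2 ≤ p.1}.indicator
        (fun z => ψ z.1 * φd z.2) := by
      funext z
      by_cases h : z.2 ≤ z.1
      · simp [Function.uncurry, hFdef, h, Set.indicator_of_mem, mem_setOf_eq]
      · simp [Function.uncurry, hFdef, h, Set.indicator_of_notMem, mem_setOf_eq]
    rw [h2]
    exact h1.indicator (isClosed_le continuous_snd continuous_fst).measurableSet
  have hswap := MeasureTheory.integral_integral_swap hFint
  -- LHS of swap equals ∫ ψ Φ
  have hL : (∫ x in Ioc (0:ℝ) 1, ∫ t in Ioc (0:ℝ) 1, F x t)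
      = ∫ x in Ioc (0:ℝ) 1, ψ x * Φ x := by
    apply setIntegral_congr_fun measurableSet_Ioc
    intro x hx
    show (∫ t in Ioc (0:ℝ) 1, F x t) = ψ x * Φ x
    have e1 : EqOn (fun t => F x t) ((Ioc 0 x).indicator (fun t => ψ x * φd t)) (Ioc 0 1) := by
      intro t ht
      by_cases h : t ≤ x
      · have : t ∈ Ioc (0:ℝ) x := ⟨ht.1, h⟩
        simp [hFdef, h, Set.indicator_of_mem this]
      · have : t ∉ Ioc (0:ℝ) x := fun hc => h hc.2
        simp [hFdef, h, Set.indicator_of_notMem this]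
    rw [setIntegral_congr_fun measurableSet_Ioc e1,
      setIntegral_indicator measurableSet_Ioc,
      inter_eq_self_of_subset_right (Ioc_subset_Ioc_right hx.2),
      integral_const_mul]
    congr 1
    rw [show Φ x = ∫ t in (0:ℝ)..x, φd t from rfl,
      intervalIntegral.integral_of_le hx.1.le]
  -- RHS of swap
  have hR : (∫ t in Ioc (0:ℝ) 1, ∫ x in Ioc (0:ℝ) 1, F x t)
      = ∫ t in Ioc (0:ℝ) 1, φd t * (q 1 - q t) := by
    apply setIntegral_congr_fun measurableSet_Ioc
    intro t ht
    show (∫ x in Ioc (0:ℝ) 1, F x t) = φd t * (q 1 - q t)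
    have e2 : EqOn (fun x => F x t) ((Icc t 1).indicator (fun x => ψ x * φd t)) (Ioc 0 1) := by
      intro x hx
      by_cases h : t ≤ x
      · have : x ∈ Icc t 1 := ⟨h, hx.2⟩
        simp [hFdef, h, Set.indicator_of_mem this]
      · have : x ∉ Icc t 1 := fun hc => h hc.1
        simp [hFdef, h, Set.indicator_of_notMem this]
    have hsub : Icc t 1 ⊆ Ioc (0:ℝ) 1 := fun x hx => ⟨lt_of_lt_of_le ht.1 hx.1, hx.2⟩
    rw [setIntegral_congr_fun measurableSet_Ioc e2,
      setIntegral_indicator measurableSet_Icc,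
      inter_eq_self_of_subset_right hsub,
      integral_Icc_eq_integral_Ioc, integral_mul_const]
    have hIoc : ∫ x in Ioc t 1, ψ x = ∫ x in t..(1:ℝ), ψ x :=
      (intervalIntegral.integral_of_le ht.2).symm
    have hsub2 : (∫ x in (0:ℝ)..1, ψ x) - ∫ x in (0:ℝ)..t, ψ x = ∫ x in t..(1:ℝ), ψ x :=
      intervalIntegral.integral_interval_sub_left (hψII 1 (by norm_num))
        (hψII t ⟨ht.1.le, ht.2⟩)
    have hq1 := hq 1 (by norm_num)
    have hqt := hq t ⟨ht.1.le, ht.2⟩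
    rw [hIoc, ← hsub2, hq1, hqt]
    ring
  -- final RHS computation
  have hRHS : ∫ t in Ioc (0:ℝ) 1, φd t * (q 1 - q t)
      = q 1 * (φ 1 - φ 0) - ∫ x in Ioc (0:ℝ) 1, q x * φd x := by
    have e : ∀ t, φd t * (q 1 - q t) = φd t * q 1 - q t * φd t := by intro t; ring
    simp_rw [e]
    rw [integral_sub (hφdInt.mul_const (q 1)) hqφd, integral_mul_const]
    have : ∫ t in Ioc (0:ℝ) 1, φd t = φ 1 - φ 0 := by
      rw [← intervalIntegral.integral_of_le (by norm_num : (0:ℝ) ≤ 1)]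
      exact intervalIntegral.integral_eq_sub_of_hasDerivAt (fun t _ => hder t)
        (hφd.intervalIntegrable 0 1)
    rw [this]; ring
  have hq1 := hq 1 (by norm_num)
  have hψint : (∫ x in Ioc (0:ℝ) 1, ψ x) = q 1 - q 0 := by
    rw [← intervalIntegral.integral_of_le (by norm_num : (0:ℝ) ≤ 1)]
    rw [hq1]; ring
  rw [hsplit, ← hL, hswap, hR, hRHS, hψint]
  ring

lemma mul_star_self (z : ℂ) : z * star z = ((‖z‖^2 : ℝ) : ℂ) := by
  have h := Complex.mul_conj z
  rw [starRingEnd_apply] at h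
  rw [h, Complex.normSq_eq_norm_sq]

lemma periodic_deriv_aux (v : ℝ → ℂ) (hv : ∀ x, v (x + 1) = v x) (x : ℝ) :
    deriv v (x + 1) = deriv v x := by
  have h : (fun y => v (y + 1)) = v := funext hv
  calc deriv v (x + 1) = deriv (fun y => v (y + 1)) x := (deriv_comp_add_const v 1 x).symm
  _ = deriv v x := by rw [h]

set_option maxHeartbeats 2000000 in
/-- there is a constant `C`, independent of `a ∈ 𝒜`, `|ξ| ≥ 1`,
`f` and `g` (with `f` 1-periodic `C¹`, `f'` absolutely continuous, `f'' = a g`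
a.e., `g` bounded measurable), such that for any periodic `W^{2,1}` solution
`u` of `-u'' + iξ a u = a f` a.e., the function `k = u - f/(1+iξ)` satisfies
`‖k‖_{H¹} ≤ C |ξ|^{-3/2} [f+g]_a`; moreover, if `∫ a f = 0` then
`‖k‖_∞ ≤ 2 [f+g]_a`.  (Sup-norm bounds are expressed pointwise.) -/
theorem statement_12 :
    ∃ C : ℝ, 0 < C ∧
      ∀ (a : ℝ → ℝ), MemA a → ∀ (ξ : ℝ), 1 ≤ |ξ| →
      ∀ (f f'' g : ℝ → ℂ),
        (∀ x, f (x + 1) = f x) → (∀ x, f'' (x + 1) = f'' x) →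
        ContDiff ℝ 1 f →
        (∀ x, deriv f x = deriv f 0 + ∫ t in (0:ℝ)..x, f'' t) →
        IntegrableOn f'' (Ioc 0 1) →
        (∀ x, g (x + 1) = g x) → Measurable g → (∃ M, ∀ x, ‖g x‖ ≤ M) →
        (∀ᵐ x : ℝ, f'' x = (a x : ℂ) * g x) →
      ∀ (u u'' : ℝ → ℂ), IsPeriodicW21 u u'' →
      (∀ᵐ x : ℝ,
        -u'' x + (ξ : ℂ) * Complex.I * (a x : ℂ) * u x = (a x : ℂ) * f x) →
      (Real.sqrt
          ((∫ x in Ioc (0:ℝ) 1,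
              ‖deriv (fun y => u y - f y / (1 + (ξ : ℂ) * Complex.I)) x‖ ^ 2)
            + (∫ x in Ioc (0:ℝ) 1,
                ‖u x - f x / (1 + (ξ : ℂ) * Complex.I)‖ ^ 2))
        ≤ C * |ξ| ^ (-(3/2 : ℝ)) * seminormA a (fun x => f x + g x)) ∧
      ((∫ x in Ioc (0:ℝ) 1, (a x : ℂ) * f x) = 0 →
        ∀ x, ‖u x - f x / (1 + (ξ : ℂ) * Complex.I)‖
          ≤ 2 * seminormA a (fun y => f y + g y)) := by
  refine ⟨3, by norm_num, ?_⟩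
  rintro a ⟨hameas, haper, hann, haint, hanorm⟩ ξ hξ f f'' g hfper hf''per hfC1 hfrep hf''int
    hgper hgmeas ⟨Mg, hMg⟩ hfg u u'' ⟨huper, hu''per, huC1, hurep, hu''int⟩ hode
  set c : ℂ := 1 + (ξ : ℂ) * Complex.I with hcdef
  have hr1 : (1:ℝ) ≤ |ξ| := hξ
  have hrpos : (0:ℝ) < |ξ| := lt_of_lt_of_le one_pos hr1
  have hcim : c.im = ξ := by simp [hcdef]
  have hcre : c.re = 1 := by simp [hcdef]
  have hc0 : c ≠ 0 := fun hc => by simp [hc] at hcre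
  have hcnorm : |ξ| ≤ ‖c‖ := by
    rw [← hcim]
    exact Complex.abs_im_le_norm c
  set k : ℝ → ℂ := fun y => u y - f y / c with hkdef
  set kd : ℝ → ℂ := fun x => deriv u x - deriv f x / c with hkddef
  set k2 : ℝ → ℂ := fun x => u'' x - f'' x / c with hk2def
  have hud : ∀ x, HasDerivAt u (deriv u x) x := fun x =>
    ((huC1.differentiable one_ne_zero) x).hasDerivAt
  have hfd : ∀ x, HasDerivAt f (deriv f x) x := fun x =>
    ((hfC1.differentiable one_ne_zero) x).hasDerivAt
  have hkd : ∀ x, HasDerivAt k (kd x) x := fun x => (hud x).sub ((hfd x).div_const c)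
  have hderivk : deriv k = kd := funext fun x => (hkd x).deriv
  have hkofu : ∀ x, k x = u x - f x / c := fun x => rfl
  have hkper : ∀ x, k (x + 1) = k x := fun x => by simp only [hkdef, huper, hfper]
  have hkdper : ∀ x, kd (x + 1) = kd x := fun x => by
    simp only [hkddef, periodic_deriv_aux u huper x, periodic_deriv_aux f hfper x]
  have hkcont : Continuous k := huC1.continuous.sub (hfC1.continuous.div_const c)
  have hkdcont : Continuous kd :=
    (huC1.continuous_deriv le_rfl).sub ((hfC1.continuous_deriv le_rfl).div_const c)
  have hk2int : IntegrableOn k2 (Ioc 0 1) := hu''int.sub (hf''int.div_const c)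
  set h : ℝ → ℂ := fun x => f x + g x with hhdef
  have hhmeas : AEStronglyMeasurable h (volume.restrict (Ioc (0:ℝ) 1)) :=
    (hfC1.continuous.aestronglyMeasurable.add hgmeas.aestronglyMeasurable).restrict
  -- bounds on compact sets
  obtain ⟨Mf, hMf⟩ := isCompact_Icc.exists_bound_of_continuousOn
    (hfC1.continuous.continuousOn (s := Icc (0:ℝ) 1))
  obtain ⟨Mk, hMk⟩ := isCompact_Icc.exists_bound_of_continuousOn
    (hkcont.continuousOn (s := Icc (0:ℝ) 1))
  have hMk0 : 0 ≤ Mk := le_trans (norm_nonneg _) (hMk 0 (by norm_num))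
  have hhbd : ∀ x ∈ Ioc (0:ℝ) 1, ‖h x‖ ≤ Mf + Mg := by
    intro x hx
    calc ‖h x‖ ≤ ‖f x‖ + ‖g x‖ := norm_add_le _ _
    _ ≤ Mf + Mg := add_le_add (hMf x (Ioc_subset_Icc_self hx)) (hMg x)
  have hkbd : ∀ x ∈ Ioc (0:ℝ) 1, ‖k x‖ ≤ Mk := fun x hx => hMk x (Ioc_subset_Icc_self hx)
  -- representation of kd
  have hkdrep : ∀ x ∈ Icc (0:ℝ) 1, kd x = kd 0 + ∫ t in (0:ℝ)..x, k2 t := by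
    intro x hx
    have hiu : IntervalIntegrable u'' volume 0 x := by
      rw [intervalIntegrable_iff_integrableOn_Ioc_of_le hx.1]
      exact hu''int.mono (Ioc_subset_Ioc_right hx.2) le_rfl
    have hif : IntervalIntegrable f'' volume 0 x := by
      rw [intervalIntegrable_iff_integrableOn_Ioc_of_le hx.1]
      exact hf''int.mono (Ioc_subset_Ioc_right hx.2) le_rfl
    have e : ∫ t in (0:ℝ)..x, k2 t
        = (∫ t in (0:ℝ)..x, u'' t) - (∫ t in (0:ℝ)..x, f'' t) / c := by
      rw [show k2 = fun t => u'' t - f'' t / c from rfl]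
      rw [intervalIntegral.integral_sub hiu (hif.div_const c),
        intervalIntegral.integral_div]
    rw [e]
    show deriv u x - deriv f x / c = (deriv u 0 - deriv f 0 / c) + _
    rw [hurep x, hfrep x]
    field_simp
    ring
  -- integration by parts
  have hibp : (∫ x in Ioc (0:ℝ) 1, k2 x * star (k x))
      = kd 1 * star (k 1) - kd 0 * star (k 0)
        - ∫ x in Ioc (0:ℝ) 1, kd x * star (kd x) :=
    ibp_unit hk2int hkdrep hkcont.star hkdcont.star (fun x => (hkd x).star)
  have hk10 : k 1 = k 0 := by have := hkper 0; rwa [zero_add] at this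
  have hkd10 : kd 1 = kd 0 := by have := hkdper 0; rwa [zero_add] at this
  set A : ℝ := ∫ x in Ioc (0:ℝ) 1, ‖kd x‖ ^ 2 with hAdef
  set B : ℝ := ∫ x in Ioc (0:ℝ) 1, a x * ‖k x‖ ^ 2 with hBdef
  set D : ℂ := ∫ x in Ioc (0:ℝ) 1, (a x : ℂ) * (h x * star (k x)) with hDdef
  set S : ℝ := ∫ x in Ioc (0:ℝ) 1, a x * (‖h x‖ * ‖k x‖) with hSdef
  set E : ℝ := ∫ x in Ioc (0:ℝ) 1, a x * ‖h x‖ ^ 2 with hEdef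
  have hannR : ∀ᵐ x ∂(volume.restrict (Ioc (0:ℝ) 1)), 0 ≤ a x := ae_restrict_of_ae hann
  have hIkd : (∫ x in Ioc (0:ℝ) 1, kd x * star (kd x)) = ((A : ℝ) : ℂ) := by
    rw [show (fun x => kd x * star (kd x)) = fun x => ((‖kd x‖ ^ 2 : ℝ) : ℂ) from
      funext fun x => mul_star_self (kd x)]
    exact integral_ofReal
  -- a.e. ODE for k2
  have hk2ode : ∀ᵐ x : ℝ, k2 x
      = (ξ : ℂ) * Complex.I * (a x : ℂ) * k x - (a x : ℂ) * h x / c := by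
    filter_upwards [hode, hfg] with x h1 h2
    have hu'' : u'' x = (ξ : ℂ) * Complex.I * (a x : ℂ) * u x - (a x : ℂ) * f x := by
      linear_combination -h1
    show u'' x - f'' x / c
      = (ξ : ℂ) * Complex.I * (a x : ℂ) * (u x - f x / c) - (a x : ℂ) * (f x + g x) / c
    rw [hu'', h2]
    have hcc : c * c⁻¹ = 1 := mul_inv_cancel₀ hc0
    linear_combination (a x * f x) * hcc - (a x * f x * c⁻¹) * hcdef
  -- integrability of the weighted quantities
  have hNfg0 : (0:ℝ) ≤ Mf + Mg :=
    le_trans (norm_nonneg (h 1)) (hhbd 1 (by norm_num))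
  have haC : IntegrableOn (fun x => (a x : ℂ)) (Ioc (0:ℝ) 1) := haint.ofReal
  have hT1 : IntegrableOn (fun x => (a x : ℂ) * (k x * star (k x))) (Ioc (0:ℝ) 1) := by
    refine integrableOn_mul_bdd (M := Mk ^ 2) measurableSet_Ioc haC
      (hkcont.mul hkcont.star).aestronglyMeasurable.restrict (fun x hx => ?_)
    rw [norm_mul, norm_star]
    have hb := hkbd x hx
    calc ‖k x‖ * ‖k x‖ ≤ Mk * Mk := mul_le_mul hb hb (norm_nonneg _) hMk0
    _ = Mk ^ 2 := (pow_two Mk).symm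
  have hT2 : IntegrableOn (fun x => (a x : ℂ) * (h x * star (k x))) (Ioc (0:ℝ) 1) := by
    refine integrableOn_mul_bdd (M := (Mf + Mg) * Mk) measurableSet_Ioc haC
      (hhmeas.mul hkcont.star.aestronglyMeasurable.restrict) (fun x hx => ?_)
    rw [norm_mul, norm_star]
    exact mul_le_mul (hhbd x hx) (hkbd x hx) (norm_nonneg _) hNfg0
  have hBint : IntegrableOn (fun x => a x * ‖k x‖ ^ 2) (Ioc (0:ℝ) 1) := by
    have hm : AEStronglyMeasurable (fun x => ‖k x‖ ^ 2) (volume.restrict (Ioc (0:ℝ) 1)) :=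
      ((hkcont.norm.pow 2).aestronglyMeasurable).restrict
    refine integrableOn_mul_bdd (M := Mk ^ 2) measurableSet_Ioc haint hm (fun x hx => ?_)
    rw [Real.norm_eq_abs, _root_.abs_of_nonneg (by positivity)]
    exact pow_le_pow_left₀ (norm_nonneg _) (hkbd x hx) 2
  have hEint : IntegrableOn (fun x => a x * ‖h x‖ ^ 2) (Ioc (0:ℝ) 1) := by
    have hm : AEStronglyMeasurable (fun x => ‖h x‖ ^ 2) (volume.restrict (Ioc (0:ℝ) 1)) :=
      (hhmeas.norm.mul hhmeas.norm).congr
        (Filter.Eventually.of_forall fun x => (pow_two ‖h x‖).symm)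
    refine integrableOn_mul_bdd (M := (Mf + Mg) ^ 2) measurableSet_Ioc haint hm (fun x hx => ?_)
    rw [Real.norm_eq_abs, _root_.abs_of_nonneg (by positivity)]
    exact pow_le_pow_left₀ (norm_nonneg _) (hhbd x hx) 2
  have hSint : IntegrableOn (fun x => a x * (‖h x‖ * ‖k x‖)) (Ioc (0:ℝ) 1) := by
    refine integrableOn_mul_bdd (M := (Mf + Mg) * Mk) measurableSet_Ioc haint
      (hhmeas.norm.mul hkcont.norm.aestronglyMeasurable.restrict) (fun x hx => ?_)
    rw [Real.norm_eq_abs, _root_.abs_of_nonneg (by positivity)]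
    exact mul_le_mul (hhbd x hx) (hkbd x hx) (norm_nonneg _) hNfg0
  -- energy identity
  have henergy : (∫ x in Ioc (0:ℝ) 1, k2 x * star (k x))
      = (ξ : ℂ) * Complex.I * ((B : ℝ) : ℂ) - D / c := by
    have e1 : (∫ x in Ioc (0:ℝ) 1, k2 x * star (k x))
        = ∫ x in Ioc (0:ℝ) 1,
            ((ξ : ℂ) * Complex.I * ((a x : ℂ) * (k x * star (k x)))
              - ((a x : ℂ) * (h x * star (k x))) / c) := by
      refine setIntegral_congr_ae measurableSet_Ioc ?_
      filter_upwards [hk2ode] with x hx _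
      rw [hx]; ring
    rw [e1, integral_sub ((hT1.const_mul _)) (hT2.div_const c),
      integral_const_mul, integral_div]
    congr 2
    rw [show (fun x => (a x : ℂ) * (k x * star (k x)))
        = fun x => ((a x * ‖k x‖ ^ 2 : ℝ) : ℂ) from funext fun x => by
      rw [mul_star_self (k x)]; push_cast; ring]
    exact integral_ofReal
  have hkey : ((A : ℝ) : ℂ) + (ξ : ℂ) * Complex.I * ((B : ℝ) : ℂ) = D / c := by
    have h1 := henergy
    rw [hibp, hkd10, hk10, hIkd] at h1
    linear_combination -h1
  have hBnn : 0 ≤ B :=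
    integral_nonneg_of_ae (by filter_upwards [hannR] with x hx; positivity)
  have hSnn : 0 ≤ S :=
    integral_nonneg_of_ae (by filter_upwards [hannR] with x hx; positivity)
  have hEnn : 0 ≤ E :=
    integral_nonneg_of_ae (by filter_upwards [hannR] with x hx; positivity)
  have hAnn : 0 ≤ A := integral_nonneg fun x => sq_nonneg _
  have hDcre : (D / c).re = A := by
    have h2 := congrArg Complex.re hkey
    simpa using h2.symm
  have hDcim : (D / c).im = ξ * B := by
    have h2 := congrArg Complex.im hkey
    simpa using h2.symm
  have hDnorm : ‖D‖ ≤ S := by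
    calc ‖D‖ ≤ ∫ x in Ioc (0:ℝ) 1, ‖(a x : ℂ) * (h x * star (k x))‖ :=
          norm_integral_le_integral_norm _
    _ = S := by
        refine setIntegral_congr_ae measurableSet_Ioc ?_
        filter_upwards [hann] with x hx _
        rw [norm_mul, norm_mul, norm_star, Complex.norm_real, Real.norm_eq_abs,
          (_root_.abs_of_nonneg hx : |a x| = a x)]
  have hDcnorm : ‖D / c‖ ≤ S / |ξ| := by
    rw [norm_div]
    exact div_le_div₀ hSnn hDnorm hrpos hcnorm
  have hAS : A ≤ S / |ξ| := by
    calc A = (D / c).re := hDcre.symm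
    _ ≤ |(D / c).re| := le_abs_self _
    _ ≤ ‖D / c‖ := by exact Complex.abs_re_le_norm _
    _ ≤ S / |ξ| := hDcnorm
  have hBS : |ξ| * B ≤ S / |ξ| := by
    calc |ξ| * B = |ξ * B| := by rw [abs_mul, (_root_.abs_of_nonneg hBnn : |B| = B)]
    _ = |(D / c).im| := by rw [hDcim]
    _ ≤ ‖D / c‖ := by exact Complex.abs_im_le_norm _
    _ ≤ S / |ξ| := hDcnorm
  -- Cauchy-Schwarz: S ≤ η √B
  set η : ℝ := seminormA a h with hηdef
  have hηE : η = Real.sqrt E := rfl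
  have hηnn : 0 ≤ η := Real.sqrt_nonneg _
  have hη2 : η ^ 2 = E := by rw [hηE]; exact Real.sq_sqrt hEnn
  set β : ℝ := Real.sqrt B with hβdef
  have hβnn : 0 ≤ β := Real.sqrt_nonneg _
  have hβ2 : β ^ 2 = B := Real.sq_sqrt hBnn
  have hcs : S ≤ η * β := by
    have key := cs_integral (μ := volume.restrict (Ioc (0:ℝ) 1))
      (p := fun x => Real.sqrt (a x) * ‖h x‖) (q := fun x => Real.sqrt (a x) * ‖k x‖)
      (Filter.Eventually.of_forall fun x => by positivity)
      (Filter.Eventually.of_forall fun x => by positivity)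
      (hEint.congr (by
        filter_upwards [hannR] with x hx
        rw [mul_pow, Real.sq_sqrt hx]))
      (hBint.congr (by
        filter_upwards [hannR] with x hx
        rw [mul_pow, Real.sq_sqrt hx]))
      (hSint.congr (by
        filter_upwards [hannR] with x hx
        rw [show Real.sqrt (a x) * ‖h x‖ * (Real.sqrt (a x) * ‖k x‖)
          = Real.sqrt (a x) * Real.sqrt (a x) * (‖h x‖ * ‖k x‖) from by ring,
          Real.mul_self_sqrt hx]))
    have e1 : (∫ x in Ioc (0:ℝ) 1, Real.sqrt (a x) * ‖h x‖ * (Real.sqrt (a x) * ‖k x‖)) = S := by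
      refine setIntegral_congr_ae measurableSet_Ioc ?_
      filter_upwards [hann] with x hx _
      rw [show Real.sqrt (a x) * ‖h x‖ * (Real.sqrt (a x) * ‖k x‖)
        = Real.sqrt (a x) * Real.sqrt (a x) * (‖h x‖ * ‖k x‖) from by ring,
        Real.mul_self_sqrt hx]
    have e2 : (∫ x in Ioc (0:ℝ) 1, (Real.sqrt (a x) * ‖h x‖) ^ 2) = E := by
      refine setIntegral_congr_ae measurableSet_Ioc ?_
      filter_upwards [hann] with x hx _
      rw [mul_pow, Real.sq_sqrt hx]
    have e3 : (∫ x in Ioc (0:ℝ) 1, (Real.sqrt (a x) * ‖k x‖) ^ 2) = B := by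
      refine setIntegral_congr_ae measurableSet_Ioc ?_
      filter_upwards [hann] with x hx _
      rw [mul_pow, Real.sq_sqrt hx]
    rw [e1, e2, e3] at key
    have h4 : S ^ 2 ≤ (η * β) ^ 2 := by rw [mul_pow, hη2, hβ2]; exact key
    calc S = Real.sqrt (S ^ 2) := (Real.sqrt_sq hSnn).symm
    _ ≤ Real.sqrt ((η * β) ^ 2) := Real.sqrt_le_sqrt h4
    _ = η * β := Real.sqrt_sq (by positivity)
  -- β ≤ η / ξ², A ≤ η²/|ξ|³
  have hβη : |ξ| ^ 2 * β ≤ η := by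
    rcases eq_or_lt_of_le hβnn with hb0 | hb0
    · rw [← hb0, mul_zero]; exact hηnn
    · have h2' : |ξ| * (S / |ξ|) = S := by field_simp
      have h1 : |ξ| ^ 2 * B ≤ S := by
        calc |ξ| ^ 2 * B = |ξ| * (|ξ| * B) := by ring
        _ ≤ |ξ| * (S / |ξ|) := mul_le_mul_of_nonneg_left hBS (le_of_lt hrpos)
        _ = S := h2'
      have h3 : |ξ| ^ 2 * β * β ≤ η * β := by
        calc |ξ| ^ 2 * β * β = |ξ| ^ 2 * B := by rw [← hβ2]; ring
        _ ≤ S := h1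
        _ ≤ η * β := hcs
      exact le_of_mul_le_mul_right h3 hb0
  have hβdiv : β ≤ η / |ξ| ^ 2 := (le_div_iff₀ (by positivity)).mpr (by rw [mul_comm]; exact hβη)
  have hAbound : A ≤ η ^ 2 / |ξ| ^ 3 := by
    have h1 : A ≤ η * β / |ξ| := by
      calc A ≤ S / |ξ| := hAS
      _ ≤ η * β / |ξ| := by gcongr
    calc A ≤ η * β / |ξ| := h1
    _ ≤ η * (η / |ξ| ^ 2) / |ξ| := by gcongr
    _ = η ^ 2 / |ξ| ^ 3 := by
        rw [← mul_div_assoc, div_div, show η * η = η ^ 2 from by ring,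
          show |ξ| ^ 2 * |ξ| = |ξ| ^ 3 from by ring]
  -- existence of a small point
  have hx0 : ∃ x₀ : ℝ, ‖k x₀‖ ≤ β := by
    by_contra hcon
    push_neg at hcon
    obtain ⟨z, hz, hzmin⟩ := isCompact_Icc.exists_isMinOn
      (nonempty_Icc.mpr (by norm_num : (0:ℝ) ≤ 1)) hkcont.norm.continuousOn
    have hm : β < ‖k z‖ := hcon z
    have hover : ‖k z‖ ^ 2 ≤ B := by
      have h1 : (∫ x in Ioc (0:ℝ) 1, a x * ‖k z‖ ^ 2) ≤ B := by
        refine integral_mono_ae (haint.mul_const _) hBint ?_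
        filter_upwards [hannR, ae_restrict_mem measurableSet_Ioc] with x hx1 hx2
        have h2 := isMinOn_iff.mp hzmin x (Ioc_subset_Icc_self hx2)
        exact mul_le_mul_of_nonneg_left (pow_le_pow_left₀ (norm_nonneg _) h2 2) hx1
      have h3 : (∫ x in Ioc (0:ℝ) 1, a x * ‖k z‖ ^ 2) = ‖k z‖ ^ 2 := by
        rw [integral_mul_const, hanorm, one_mul]
      linarith [h3 ▸ h1]
    have h5 : β ^ 2 < ‖k z‖ ^ 2 := by nlinarith only [hm, hβnn]
    linarith only [hover, hβ2, h5]
  -- L¹ bound for kd via Cauchy-Schwarz with weight 1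
  have hAint : IntegrableOn (fun x => ‖kd x‖ ^ 2) (Ioc (0:ℝ) 1) :=
    (hkdcont.norm.pow 2).integrableOn_Ioc
  have hkdl1 : (∫ x in Ioc (0:ℝ) 1, ‖kd x‖) ≤ Real.sqrt A := by
    have hone : IntegrableOn (fun _ : ℝ => (1:ℝ)) (Ioc (0:ℝ) 1) :=
      integrableOn_const (by rw [Real.volume_Ioc]; norm_num)
    have key := cs_integral (μ := volume.restrict (Ioc (0:ℝ) 1))
      (p := fun x => ‖kd x‖) (q := fun _ => 1)
      (Filter.Eventually.of_forall fun x => norm_nonneg _)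
      (Filter.Eventually.of_forall fun x => zero_le_one)
      hAint (hone.congr (Filter.Eventually.of_forall fun x => by norm_num))
      ((hkdcont.norm.integrableOn_Ioc).congr
        (Filter.Eventually.of_forall fun x => (mul_one ‖kd x‖).symm))
    simp only [mul_one, one_pow] at key
    rw [setIntegral_const, Real.volume_real_Ioc, smul_eq_mul] at key
    norm_num at key
    have hnn : 0 ≤ ∫ x in Ioc (0:ℝ) 1, ‖kd x‖ :=
      integral_nonneg fun x => norm_nonneg _
    calc (∫ x in Ioc (0:ℝ) 1, ‖kd x‖)
        = Real.sqrt ((∫ x in Ioc (0:ℝ) 1, ‖kd x‖) ^ 2) := (Real.sqrt_sq hnn).symm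
    _ ≤ Real.sqrt A := Real.sqrt_le_sqrt key
  -- sup bound
  have hsup : ∀ x : ℝ, ‖k x‖ ≤ β + Real.sqrt A := by
    obtain ⟨x₀, hx₀⟩ := hx0
    intro x
    set n : ℤ := ⌈x₀ - x⌉ with hn
    have h1 : x₀ ≤ x + n := by
      have := Int.le_ceil (x₀ - x); rw [← hn] at this; linarith
    have h2 : x + n ≤ x₀ + 1 := by
      have := Int.ceil_lt_add_one (x₀ - x); rw [← hn] at this; linarith
    have hpk : Function.Periodic k 1 := hkper
    have hkx : k (x + n) = k x := by
      have := (hpk.int_mul n) x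
      rwa [mul_one] at this
    have hftc : k (x + n) - k x₀ = ∫ t in x₀..(x + n), kd t :=
      (intervalIntegral.integral_eq_sub_of_hasDerivAt (fun t _ => hkd t)
        (hkdcont.intervalIntegrable _ _)).symm
    have hkval : k (x + n) = k x₀ + ∫ t in x₀..(x + n), kd t := by
      rw [← hftc]; ring
    have hpkd : Function.Periodic (fun t => ‖kd t‖) 1 := fun t => by
      simp only [hkdper t]
    calc ‖k x‖ = ‖k (x + n)‖ := by rw [hkx]
    _ ≤ ‖k x₀‖ + ‖∫ t in x₀..(x + n), kd t‖ := by
        rw [hkval]; exact norm_add_le _ _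
    _ ≤ β + ∫ t in x₀..(x + n), ‖kd t‖ :=
        add_le_add hx₀ (intervalIntegral.norm_integral_le_integral_norm h1)
    _ ≤ β + ∫ t in x₀..(x₀ + 1), ‖kd t‖ := by
        have hadd : (∫ t in x₀..(x + n), ‖kd t‖) + ∫ t in (x + n)..(x₀ + 1), ‖kd t‖
            = ∫ t in x₀..(x₀ + 1), ‖kd t‖ :=
          intervalIntegral.integral_add_adjacent_intervals
            (hkdcont.norm.intervalIntegrable _ _) (hkdcont.norm.intervalIntegrable _ _)
        have hpos : 0 ≤ ∫ t in (x + n)..(x₀ + 1), ‖kd t‖ :=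
          intervalIntegral.integral_nonneg h2 (fun t _ => norm_nonneg _)
        linarith
    _ = β + ∫ t in (0:ℝ)..1, ‖kd t‖ := by
        have := hpkd.intervalIntegral_add_eq x₀ 0
        rw [zero_add] at this
        rw [this]
    _ ≤ β + Real.sqrt A := by
        rw [intervalIntegral.integral_of_le (by norm_num : (0:ℝ) ≤ 1)]
        exact add_le_add_right hkdl1 β
  -- rpow bookkeeping
  set τ : ℝ := |ξ| ^ (-(3/2 : ℝ)) with hτdef
  have hτpos : 0 < τ := Real.rpow_pos_of_pos hrpos _
  have hτ2 : τ ^ 2 = |ξ| ^ (-(3:ℝ)) := by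
    rw [hτdef, ← Real.rpow_natCast (|ξ| ^ (-(3/2 : ℝ))) 2, ← Real.rpow_mul hrpos.le]
    norm_num
  have hr3 : |ξ| ^ (-(3:ℝ)) = (|ξ| ^ 3)⁻¹ := by
    rw [Real.rpow_neg hrpos.le, show ((3:ℝ)) = ((3:ℕ):ℝ) from by norm_num,
      Real.rpow_natCast]
  have hτle1 : τ ≤ 1 := Real.rpow_le_one_of_one_le_of_nonpos hr1 (by norm_num)
  have hβτ : β ≤ η * τ := by
    have hr2 : |ξ| ^ (-(2:ℝ)) = (|ξ| ^ 2)⁻¹ := by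
      rw [Real.rpow_neg hrpos.le, show ((2:ℝ)) = ((2:ℕ):ℝ) from by norm_num,
        Real.rpow_natCast]
    have h1 : η / |ξ| ^ 2 = η * |ξ| ^ (-(2:ℝ)) := by
      rw [hr2]; ring
    have h2 : |ξ| ^ (-(2:ℝ)) ≤ τ := by
      rw [hτdef]
      exact Real.rpow_le_rpow_of_exponent_le hr1 (by norm_num)
    calc β ≤ η / |ξ| ^ 2 := hβdiv
    _ = η * |ξ| ^ (-(2:ℝ)) := h1
    _ ≤ η * τ := by gcongr
  have hsqrtA : Real.sqrt A ≤ η * τ := by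
    have h3 : A ≤ (η * τ) ^ 2 := by
      have e : (η * τ) ^ 2 = η ^ 2 * (|ξ| ^ 3)⁻¹ := by
        rw [mul_pow, hτ2, hr3]
      rw [e]
      calc A ≤ η ^ 2 / |ξ| ^ 3 := hAbound
      _ = η ^ 2 * (|ξ| ^ 3)⁻¹ := by ring
    calc Real.sqrt A ≤ Real.sqrt ((η * τ) ^ 2) := Real.sqrt_le_sqrt h3
    _ = η * τ := Real.sqrt_sq (by positivity)
  have hsup2 : ∀ x : ℝ, ‖k x‖ ≤ 2 * (η * τ) := fun x => by
    have h1 := hsup x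
    linarith only [h1, hβτ, hsqrtA]
  constructor
  · -- H¹ bound
    show Real.sqrt ((∫ x in Ioc (0:ℝ) 1, ‖deriv k x‖ ^ 2)
        + ∫ x in Ioc (0:ℝ) 1, ‖k x‖ ^ 2) ≤ 3 * τ * η
    rw [hderivk]
    have hIk2 : (∫ x in Ioc (0:ℝ) 1, ‖k x‖ ^ 2) ≤ (2 * (η * τ)) ^ 2 := by
      have hint : IntegrableOn (fun x => ‖k x‖ ^ 2) (Ioc (0:ℝ) 1) :=
        (hkcont.norm.pow 2).integrableOn_Ioc
      have hintc : IntegrableOn (fun _ : ℝ => (2 * (η * τ)) ^ 2) (Ioc (0:ℝ) 1) :=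
        integrableOn_const (by rw [Real.volume_Ioc]; norm_num)
      calc (∫ x in Ioc (0:ℝ) 1, ‖k x‖ ^ 2)
          ≤ ∫ _ in Ioc (0:ℝ) 1, (2 * (η * τ)) ^ 2 := by
            refine integral_mono hint hintc (fun x => ?_)
            exact pow_le_pow_left₀ (norm_nonneg _) (hsup2 x) 2
      _ = (2 * (η * τ)) ^ 2 := by
          rw [setIntegral_const, Real.volume_real_Ioc]; norm_num
    have hsum : A + (∫ x in Ioc (0:ℝ) 1, ‖k x‖ ^ 2) ≤ (3 * τ * η) ^ 2 := by
      have hA1 : A ≤ (η * τ) ^ 2 := by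
        calc A = Real.sqrt A ^ 2 := (Real.sq_sqrt hAnn).symm
        _ ≤ (η * τ) ^ 2 := pow_le_pow_left₀ (Real.sqrt_nonneg A) hsqrtA 2
      have e1 : (2 * (η * τ)) ^ 2 = 4 * (η * τ) ^ 2 := by ring
      have e2 : (3 * τ * η) ^ 2 = 9 * (η * τ) ^ 2 := by ring
      linarith only [hA1, hIk2, e1, e2, sq_nonneg (η * τ)]
    calc Real.sqrt (A + ∫ x in Ioc (0:ℝ) 1, ‖k x‖ ^ 2)
        ≤ Real.sqrt ((3 * τ * η) ^ 2) := Real.sqrt_le_sqrt hsum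
    _ = 3 * τ * η := Real.sqrt_sq (by positivity)
  · -- sup bound
    intro _ x
    show ‖k x‖ ≤ 2 * η
    calc ‖k x‖ ≤ 2 * (η * τ) := hsup2 x
    _ ≤ 2 * (η * 1) := by gcongr
    _ = 2 * η := by ring
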